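/- arXiv:2006.09063 — 2 statements merged into one kernel-verified Lean document; each statement's English description precedes it below -/
import Mathlib

section
/- A rank-one convex function g : ℝ^{m×n} → ℝ with g([-2,2]^{mn}) ⊆ [-1,1] satisfies the Lipschitz bound Lip(g, [-1,1]^{mn}) ≤ min{m,n} · osc(g, [-2,2]^{mn}) ≤ 2·min{m,n}, where osc denotes the oscillation (sup minus inf) on the set. -/
open Matrix Set

attribute [local instance] Matrix.frobeniusNormedAddCommGroup

/-- A function on `m × n` real matrices is rank-one convex if it is convex along
all rank-one lines. -/
def RankOneConvex {m n : ℕ} (f : Matrix (Fin m) (Fin n) ℝ → ℝ) : Prop :=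
  ∀ A B : Matrix (Fin m) (Fin n) ℝ, B.rank ≤ 1 →
    ConvexOn ℝ Set.univ fun t : ℝ => f (A + t • B)

/-- The cube `[-r, r]^{mn}` of matrices. -/
def cube (m n : ℕ) (r : ℝ) : Set (Matrix (Fin m) (Fin n) ℝ) :=
  {A | ∀ j k, A j k ∈ Set.Icc (-r) r}

lemma vecMulVec_rank_le_one {m n : ℕ} (w : Fin m → ℝ) (v : Fin n → ℝ) :
    (Matrix.vecMulVec w v).rank ≤ 1 := by
  rw [Matrix.vecMulVec_eq (Fin 1)]
  exact (Matrix.rank_mul_le_left _ _).trans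
    ((Matrix.rank_le_card_width _).trans (by simp))

lemma oneD {h : ℝ → ℝ} (hc : ConvexOn ℝ (Set.univ : Set ℝ) h) {δ M M' : ℝ} (hδ : 0 < δ)
    (h1 : h (1 + δ) ≤ M) (h2 : M' ≤ h (-δ)) (h3 : h 0 ≤ M) (h4 : M' ≤ h 1)
    (h5 : h (-δ) ≤ M) (h6 : M' ≤ h 0) :
    |h 1 - h 0| ≤ (M - M') / δ := by
  have s1 := hc.slope_mono_adjacent (Set.mem_univ (0 : ℝ)) (Set.mem_univ (1 + δ))
    (show (0:ℝ) < 1 by norm_num) (show (1:ℝ) < 1 + δ by linarith)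
  have s2 := hc.slope_mono_adjacent (Set.mem_univ (-δ)) (Set.mem_univ (1 : ℝ))
    (show -δ < (0:ℝ) by linarith) (show (0:ℝ) < 1 by norm_num)
  rw [sub_zero, div_one] at s1 s2
  rw [sub_neg_eq_add, zero_add] at s2
  rw [show (1:ℝ) + δ - 1 = δ by ring] at s1
  have d1 : (h (1 + δ) - h 1) / δ ≤ (M - M') / δ :=
    div_le_div_of_nonneg_right (by linarith) hδ.le
  have d2 : (M' - M) / δ ≤ (h 0 - h (-δ)) / δ :=
    div_le_div_of_nonneg_right (by linarith) hδ.le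
  have hneg : (M' - M) / δ = -((M - M') / δ) := by ring
  rw [hneg] at d2
  rw [abs_sub_le_iff]
  constructor
  · linarith
  · linarith

lemma entry_le_frobenius {m n : ℕ} (C : Matrix (Fin m) (Fin n) ℝ) (j : Fin m) (k : Fin n) :
    |C j k| ≤ ‖C‖ := by
  rw [Matrix.frobenius_norm_def]
  have hle : ‖C j k‖ ^ (2:ℝ) ≤ ∑ i, ∑ l, ‖C i l‖ ^ (2:ℝ) := by
    calc ‖C j k‖ ^ (2:ℝ) ≤ ∑ l, ‖C j l‖ ^ (2:ℝ) :=
          Finset.single_le_sum (fun l _ => Real.rpow_nonneg (norm_nonneg _) _)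
            (Finset.mem_univ k)
      _ ≤ ∑ i, ∑ l, ‖C i l‖ ^ (2:ℝ) :=
          Finset.single_le_sum
            (fun i _ => Finset.sum_nonneg fun l _ => Real.rpow_nonneg (norm_nonneg _) _)
            (Finset.mem_univ j)
  calc |C j k| = (‖C j k‖ ^ (2:ℝ)) ^ ((1:ℝ)/2) := by
        rw [← Real.rpow_mul (norm_nonneg _)]
        norm_num [Real.norm_eq_abs, Real.rpow_one]
    _ ≤ (∑ i, ∑ l, ‖C i l‖ ^ (2:ℝ)) ^ ((1:ℝ)/2) :=
        Real.rpow_le_rpow (Real.rpow_nonneg (norm_nonneg _) _) hle (by norm_num)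

lemma frob_mono {m n : ℕ} {C D : Matrix (Fin m) (Fin n) ℝ}
    (h : ∀ j k, |C j k| ≤ |D j k|) : ‖C‖ ≤ ‖D‖ := by
  rw [Matrix.frobenius_norm_def, Matrix.frobenius_norm_def]
  refine Real.rpow_le_rpow (Finset.sum_nonneg fun i _ =>
    Finset.sum_nonneg fun l _ => Real.rpow_nonneg (norm_nonneg _) _) ?_ (by norm_num)
  refine Finset.sum_le_sum fun i _ => Finset.sum_le_sum fun l _ =>
    Real.rpow_le_rpow (norm_nonneg _) ?_ (by norm_num)
  simpa [Real.norm_eq_abs] using h i l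

lemma step_lemma {m n : ℕ} {g : Matrix (Fin m) (Fin n) ℝ → ℝ} (hg : RankOneConvex g)
    {M M' : ℝ} (hub : ∀ Z ∈ cube m n 2, g Z ≤ M) (hlb : ∀ Z ∈ cube m n 2, M' ≤ g Z)
    {X Y : Matrix (Fin m) (Fin n) ℝ} (hX : X ∈ cube m n 1) (hY : Y ∈ cube m n 1)
    (hr : (Y - X).rank ≤ 1) : |g Y - g X| ≤ (M - M') * ‖Y - X‖ := by
  by_cases hC : Y - X = 0
  · have hYX : Y = X := by rwa [sub_eq_zero] at hC
    simp [hYX]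
  · set C : Matrix (Fin m) (Fin n) ℝ := Y - X with hCdef
    have hC0 : 0 < ‖C‖ := by
      rw [norm_pos_iff]; exact hC
    set δ : ℝ := 1 / ‖C‖ with hδdef
    have hδ : 0 < δ := by positivity
    have hd : ∀ j k, |δ * C j k| ≤ 1 := by
      intro j k
      rw [abs_mul, abs_of_pos hδ]
      calc δ * |C j k| ≤ δ * ‖C‖ := by
            have := entry_le_frobenius C j k
            nlinarith
        _ = 1 := by rw [hδdef, one_div, inv_mul_cancel₀ hC0.ne']
    have hC1 : ∀ j k, C j k = Y j k - X j k := fun j k => rfl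
    have hcube1 : X ∈ cube m n 2 := fun j k => by
      have := hX j k; simp only [Set.mem_Icc] at *; constructor <;> linarith
    have hcube2 : X + (1:ℝ) • C ∈ cube m n 2 := by
      have hXY : X + (1:ℝ) • C = Y := by simp [hCdef]
      rw [hXY]
      intro j k
      have := hY j k; simp only [Set.mem_Icc] at *; constructor <;> linarith
    have hcube3 : X + (1 + δ) • C ∈ cube m n 2 := by
      intro j k
      have h1 := hd j k
      have h2 := hY j k
      rw [abs_le] at h1
      simp only [Set.mem_Icc] at h2 ⊢
      simp only [Matrix.add_apply, Matrix.smul_apply, smul_eq_mul]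
      have hc := hC1 j k
      have hexp : X j k + (1 + δ) * C j k = Y j k + δ * C j k := by
        rw [hc]; ring
      rw [hexp]
      constructor <;> linarith
    have hcube4 : X + (-δ) • C ∈ cube m n 2 := by
      intro j k
      have h1 := hd j k
      have h2 := hX j k
      rw [abs_le] at h1
      simp only [Set.mem_Icc] at h2 ⊢
      simp only [Matrix.add_apply, Matrix.smul_apply, smul_eq_mul]
      have hexp : X j k + (-δ) * C j k = X j k - δ * C j k := by ring
      rw [hexp]
      constructor <;> linarith
    have hconv := hg X C hr
    have key := oneD hconv hδ (hub _ hcube3) (hlb _ hcube4)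
      (by simpa using hub _ (by simpa using hcube1)) (hlb _ hcube2)
      (hub _ hcube4) (by simpa using hlb _ (by simpa using hcube1))
    have h0 : X + (0:ℝ) • C = X := by simp
    have h1' : X + (1:ℝ) • C = Y := by simp [hCdef]
    rw [h0, h1'] at key
    calc |g Y - g X| ≤ (M - M') / δ := key
      _ = (M - M') * ‖C‖ := by rw [hδdef]; field_simp
      _ = (M - M') * ‖Y - X‖ := rfl

lemma rows_lemma {m n : ℕ} {g : Matrix (Fin m) (Fin n) ℝ → ℝ} (hg : RankOneConvex g)
    {M M' : ℝ} (hub : ∀ Z ∈ cube m n 2, g Z ≤ M) (hlb : ∀ Z ∈ cube m n 2, M' ≤ g Z)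
    (hMM : M' ≤ M)
    {A B : Matrix (Fin m) (Fin n) ℝ} (hA : A ∈ cube m n 1) (hB : B ∈ cube m n 1) :
    |g A - g B| ≤ (m : ℝ) * (M - M') * ‖A - B‖ := by
  classical
  set X : ℕ → Matrix (Fin m) (Fin n) ℝ :=
    fun i => fun j k => if (j : ℕ) < i then B j k else A j k with hXdef
  have hX0 : X 0 = A := by funext j k; simp [hXdef]
  have hXm : X m = B := by funext j k; simp [hXdef, j.isLt]
  have hXcube : ∀ i, X i ∈ cube m n 1 := by
    intro i j k
    by_cases h : (j : ℕ) < i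
    · simpa [hXdef, h] using hB j k
    · simpa [hXdef, h] using hA j k
  have hdiff : ∀ i, i < m → ∀ j k,
      (X (i+1) - X i) j k = if (j : ℕ) = i then B j k - A j k else 0 := by
    intro i hi j k
    simp only [Matrix.sub_apply, hXdef]
    change (if (j : ℕ) < i + 1 then B j k else A j k) - (if (j : ℕ) < i then B j k else A j k) = _
    by_cases h1 : (j : ℕ) < i
    · have h2 : (j : ℕ) < i + 1 := Nat.lt_succ_of_lt h1
      have h3 : (j : ℕ) ≠ i := Nat.ne_of_lt h1
      simp [h1, h2, h3]
    · by_cases h2 : (j : ℕ) = i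
      · have h3 : (j : ℕ) < i + 1 := by omega
        simp [h1, h2, h3]
      · have h3 : ¬ (j : ℕ) < i + 1 := by omega
        simp [h1, h2, h3]
  have hstep : ∀ i, i < m → |g (X (i+1)) - g (X i)| ≤ (M - M') * ‖A - B‖ := by
    intro i hi
    have hrank : (X (i+1) - X i).rank ≤ 1 := by
      have heq : X (i+1) - X i =
          Matrix.vecMulVec (fun j : Fin m => if (j : ℕ) = i then (1:ℝ) else 0)
            (fun k => B ⟨i, hi⟩ k - A ⟨i, hi⟩ k) := by
        funext j k
        rw [hdiff i hi j k]
        simp only [Matrix.vecMulVec_apply]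
        by_cases h : (j : ℕ) = i
        · have : j = ⟨i, hi⟩ := Fin.ext h
          simp [h, this]
        · simp [h]
      rw [heq]
      exact vecMulVec_rank_le_one _ _
    have hnorm : ‖X (i+1) - X i‖ ≤ ‖A - B‖ := by
      apply frob_mono
      intro j k
      rw [hdiff i hi j k]
      by_cases h : (j : ℕ) = i
      · simp only [h, if_true, Matrix.sub_apply]
        rw [abs_sub_comm]
      · simp [h]
    have := step_lemma hg hub hlb (hXcube i) (hXcube (i+1)) hrank
    refine this.trans ?_
    exact mul_le_mul_of_nonneg_left hnorm (by linarith)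
  calc |g A - g B| = |∑ i ∈ Finset.range m, (g (X (i+1)) - g (X i))| := by
        rw [Finset.sum_range_sub (fun i => g (X i)), hX0, hXm, abs_sub_comm]
    _ ≤ ∑ i ∈ Finset.range m, |g (X (i+1)) - g (X i)| := Finset.abs_sum_le_sum_abs _ _
    _ ≤ ∑ i ∈ Finset.range m, (M - M') * ‖A - B‖ :=
        Finset.sum_le_sum fun i hi => hstep i (Finset.mem_range.mp hi)
    _ = (m : ℝ) * ((M - M') * ‖A - B‖) := by
        simp [Finset.sum_const, Finset.card_range, nsmul_eq_mul]
    _ = (m : ℝ) * (M - M') * ‖A - B‖ := by ring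

theorem stmt0 {m n : ℕ} (hm : 2 ≤ m) (hn : 2 ≤ n)
    (g : Matrix (Fin m) (Fin n) ℝ → ℝ) (hg : RankOneConvex g)
    (hrange : ∀ A ∈ cube m n 2, g A ∈ Set.Icc (-1 : ℝ) 1) :
    (∀ A ∈ cube m n 1, ∀ B ∈ cube m n 1,
      |g A - g B| ≤ (min m n : ℝ) *
        (sSup (g '' cube m n 2) - sInf (g '' cube m n 2)) * ‖A - B‖) ∧
    (min m n : ℝ) * (sSup (g '' cube m n 2) - sInf (g '' cube m n 2))
      ≤ 2 * (min m n : ℝ) := by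
  set M : ℝ := sSup (g '' cube m n 2) with hMdef
  set M' : ℝ := sInf (g '' cube m n 2) with hM'def
  have h0mem : (0 : Matrix (Fin m) (Fin n) ℝ) ∈ cube m n 2 := by
    intro j k; simp only [Matrix.zero_apply, Set.mem_Icc]; norm_num
  have hne : (g '' cube m n 2).Nonempty := ⟨g 0, 0, h0mem, rfl⟩
  have hsub : g '' cube m n 2 ⊆ Set.Icc (-1 : ℝ) 1 := by
    rintro _ ⟨Z, hZ, rfl⟩; exact hrange Z hZ
  have hbddA : BddAbove (g '' cube m n 2) := ⟨1, fun x hx => (hsub hx).2⟩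
  have hbddB : BddBelow (g '' cube m n 2) := ⟨-1, fun x hx => (hsub hx).1⟩
  have hub : ∀ Z ∈ cube m n 2, g Z ≤ M := fun Z hZ => le_csSup hbddA ⟨Z, hZ, rfl⟩
  have hlb : ∀ Z ∈ cube m n 2, M' ≤ g Z := fun Z hZ => csInf_le hbddB ⟨Z, hZ, rfl⟩
  have hM1 : M ≤ 1 := csSup_le hne fun x hx => (hsub hx).2
  have hM'1 : -1 ≤ M' := le_csInf hne fun x hx => (hsub hx).1
  have hMM : M' ≤ M := le_trans (hlb 0 h0mem) (hub 0 h0mem)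
  constructor
  · intro A hA B hB
    rcases le_or_gt m n with hmn | hmn
    · have hcast : (min m n : ℝ) = (m : ℝ) :=
        min_eq_left (by exact_mod_cast hmn)
      rw [hcast]
      exact rows_lemma hg hub hlb hMM hA hB
    · -- transpose
      have hcast : (min m n : ℝ) = (n : ℝ) :=
        min_eq_right (by exact_mod_cast hmn.le)
      rw [hcast]
      set g' : Matrix (Fin n) (Fin m) ℝ → ℝ := fun Z => g Zᵀ with hg'def
      have hg' : RankOneConvex g' := by
        intro P Q hQ
        have hQ' : (Qᵀ).rank ≤ 1 := by rw [Matrix.rank_transpose]; exact hQ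
        have hconv := hg Pᵀ Qᵀ hQ'
        have heq : (fun t : ℝ => g' (P + t • Q)) = fun t : ℝ => g (Pᵀ + t • Qᵀ) := by
          funext t
          simp [hg'def, Matrix.transpose_add, Matrix.transpose_smul]
        rw [heq]
        exact hconv
      have hub' : ∀ Z ∈ cube n m 2, g' Z ≤ M := fun Z hZ =>
        hub Zᵀ (fun j k => hZ k j)
      have hlb' : ∀ Z ∈ cube n m 2, M' ≤ g' Z := fun Z hZ =>
        hlb Zᵀ (fun j k => hZ k j)
      have hA' : Aᵀ ∈ cube n m 1 := fun j k => hA k j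
      have hB' : Bᵀ ∈ cube n m 1 := fun j k => hB k j
      have := rows_lemma hg' hub' hlb' hMM hA' hB'
      have heq1 : g' Aᵀ = g A := by simp [hg'def]
      have heq2 : g' Bᵀ = g B := by simp [hg'def]
      have heq3 : ‖Aᵀ - Bᵀ‖ = ‖A - B‖ := by
        rw [← Matrix.transpose_sub, Matrix.frobenius_norm_transpose]
      rw [heq1, heq2, heq3] at this
      exact this
  · have hmin0 : (0 : ℝ) ≤ (min m n : ℝ) := by positivity
    have : M - M' ≤ 2 := by linarith
    calc (min m n : ℝ) * (M - M') ≤ (min m n : ℝ) * 2 :=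
          mul_le_mul_of_nonneg_left this hmin0
      _ = 2 * (min m n : ℝ) := by ring
end

section
/- If f : ℝ^{m×n} → ℝ is quasiconvex, then f is N-wave quasiconvex for every N ∈ ℕ: for all A ∈ ℝ^{m×n} and all (a_i, n_i, c_i)_{i=1}^N ∈ ℝ^m × ℤ^n × ℝ, f(A) ≤ Σ_{ε ∈ {-1,1}^N} ν_ε f(A + X_ε), where ν_ε and X_ε are the weights and support points of the N-wave configuration. -/
open MeasureTheory Matrix

/-- The 1-periodic sawtooth function: `s(t) = t` on `[0,1/2]`, `s(t) = 1 - t` on `[1/2,1]`. -/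
noncomputable def sawtooth (t : ℝ) : ℝ := min (Int.fract t) (1 - Int.fract t)

/-- The 1-periodic Haar function `h = s'`. -/
noncomputable def haar (t : ℝ) : ℝ := if Int.fract t < 1 / 2 then 1 else -1

/-- Dot product of a real vector with an integer vector. -/
def idot {n : ℕ} (x : Fin n → ℝ) (v : Fin n → ℤ) : ℝ := ∑ j, x j * (v j : ℝ)

/-- The fundamental domain `[0,1)^n` of the torus `𝕋^n = ℝ^n/ℤ^n`. -/
def unitBox (n : ℕ) : Set (Fin n → ℝ) := Set.univ.pi fun _ => Set.Ico (0 : ℝ) 1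

/-- The sign `±1` associated to a boolean. -/
def sgn (b : Bool) : ℝ := if b then 1 else -1

/-- The gradient matrix `Dφ(x)` of a map `φ : ℝⁿ → ℝᵐ`. -/
noncomputable def gradMatrix {m n : ℕ} (φ : (Fin n → ℝ) → Fin m → ℝ)
    (x : Fin n → ℝ) : Matrix (Fin m) (Fin n) ℝ :=
  Matrix.of fun j k => fderiv ℝ φ x (Pi.single k 1) j

/-- `f` is quasiconvex: Jensen's inequality holds for the gradient of every
Lipschitz, ℤⁿ-periodic map `φ`, integrated over the fundamental domain of the torus. -/
noncomputable def QuasiconvexFn {m n : ℕ} (f : Matrix (Fin m) (Fin n) ℝ → ℝ) : Prop :=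
  ∀ (A : Matrix (Fin m) (Fin n) ℝ) (φ : (Fin n → ℝ) → Fin m → ℝ) (Kc : NNReal),
    LipschitzWith Kc φ →
    (∀ (x : Fin n → ℝ) (k : Fin n → ℤ), φ (x + fun j => (k j : ℝ)) = φ x) →
    f A ≤ ∫ x in unitBox n, f (A + gradMatrix φ x)


lemma sawtooth_nonneg (t : ℝ) : 0 ≤ sawtooth t := by
  have h1 := Int.fract_nonneg t
  have h2 := Int.fract_lt_one t
  unfold sawtooth; simp only [le_min_iff]; constructor <;> linarith

lemma sawtooth_exists (t : ℝ) : ∃ k : ℤ, sawtooth t = |t - k| := by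
  rcases le_total (Int.fract t) (1 - Int.fract t) with h | h
  · refine ⟨⌊t⌋, ?_⟩
    have hf : Int.fract t = t - ⌊t⌋ := by rw [Int.fract]
    rw [sawtooth, min_eq_left h, abs_of_nonneg (by linarith [Int.fract_nonneg t] : (0:ℝ) ≤ t - ⌊t⌋)]
    linarith
  · refine ⟨⌊t⌋ + 1, ?_⟩
    have hf : Int.fract t = t - ⌊t⌋ := by rw [Int.fract]
    push_cast
    rw [sawtooth, min_eq_right h, abs_sub_comm, abs_of_nonneg (by linarith [Int.fract_lt_one t])]
    linarith
lemma sawtooth_le (t : ℝ) (k : ℤ) : sawtooth t ≤ |t - k| := by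
  have hf : Int.fract t = t - ⌊t⌋ := by rw [Int.fract]
  rcases le_or_gt (k:ℝ) t with h | h
  · have hk : (k:ℝ) ≤ ⌊t⌋ := by exact_mod_cast Int.le_floor.mpr h
    calc sawtooth t ≤ Int.fract t := min_le_left _ _
      _ ≤ t - k := by linarith
      _ ≤ |t - k| := le_abs_self _
  · have hk : (⌊t⌋:ℝ) + 1 ≤ k := by exact_mod_cast Int.lt_iff_add_one_le.mp (Int.floor_lt.mpr h)
    calc sawtooth t ≤ 1 - Int.fract t := min_le_right _ _
      _ ≤ k - t := by linarith
      _ ≤ |t - k| := by rw [abs_sub_comm]; exact le_abs_self _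

lemma sawtooth_lip (s t : ℝ) : |sawtooth s - sawtooth t| ≤ |s - t| := by
  rw [abs_sub_le_iff]
  constructor
  · obtain ⟨k, hk⟩ := sawtooth_exists t
    calc sawtooth s - sawtooth t ≤ |s - k| - |t - k| := by
          rw [hk]; exact sub_le_sub_right (sawtooth_le s k) _
      _ ≤ |s - t| := by
          have := abs_sub_abs_le_abs_sub (s - k) (t - k); simpa using this
  · obtain ⟨k, hk⟩ := sawtooth_exists s
    calc sawtooth t - sawtooth s ≤ |t - k| - |s - k| := by
          rw [hk]; exact sub_le_sub_right (sawtooth_le t k) _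
      _ ≤ |s - t| := by
          have := abs_sub_abs_le_abs_sub (t - k) (s - k)
          rw [abs_sub_comm s t]; simpa using this

lemma sawtooth_add_int (t : ℝ) (z : ℤ) : sawtooth (t + z) = sawtooth t := by
  unfold sawtooth; rw [Int.fract_add_intCast]

lemma sawtooth_hasDerivAt {t : ℝ} (h0 : Int.fract t ≠ 0) (hh : Int.fract t ≠ 1/2) :
    HasDerivAt sawtooth (haar t) t := by
  have hf : Int.fract t = t - ⌊t⌋ := by rw [Int.fract]
  have hf0 : 0 < Int.fract t := lt_of_le_of_ne (Int.fract_nonneg t) (Ne.symm h0)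
  have hf1 : Int.fract t < 1 := Int.fract_lt_one t
  by_cases h : Int.fract t < 1/2
  · have ht : t ∈ Set.Ioo ((⌊t⌋:ℝ)) (⌊t⌋ + 1/2) := ⟨by linarith, by linarith⟩
    have key : Set.EqOn sawtooth (fun s => s - ⌊t⌋) (Set.Ioo ((⌊t⌋:ℝ)) (⌊t⌋ + 1/2)) := by
      intro s hs
      obtain ⟨hs1, hs2⟩ := hs
      have hfloor : ⌊s⌋ = ⌊t⌋ := Int.floor_eq_iff.mpr ⟨le_of_lt hs1, by linarith⟩
      have hfr : Int.fract s = s - ⌊t⌋ := by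
        rw [Int.fract, hfloor]
      simp only [sawtooth, hfr]
      rw [min_eq_left (by linarith)]
    have hd : HasDerivAt (fun s => s - ((⌊t⌋:ℤ):ℝ)) 1 t := (hasDerivAt_id t).sub_const _
    have heq : sawtooth =ᶠ[nhds t] (fun s => s - (⌊t⌋:ℝ)) :=
      Filter.eventuallyEq_of_mem (isOpen_Ioo.mem_nhds ht) key
    have hres := hd.congr_of_eventuallyEq heq
    have hh1 : haar t = 1 := by rw [haar, if_pos h]
    rw [hh1]; exact hres
  · have hgt : 1/2 < Int.fract t := lt_of_le_of_ne (not_lt.mp h) (Ne.symm hh)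
    have ht : t ∈ Set.Ioo ((⌊t⌋:ℝ) + 1/2) (⌊t⌋ + 1) := ⟨by linarith, by linarith⟩
    have key : Set.EqOn sawtooth (fun s => (⌊t⌋:ℝ) + 1 - s) (Set.Ioo ((⌊t⌋:ℝ) + 1/2) (⌊t⌋ + 1)) := by
      intro s hs
      obtain ⟨hs1, hs2⟩ := hs
      have hfloor : ⌊s⌋ = ⌊t⌋ := Int.floor_eq_iff.mpr ⟨by linarith, by exact_mod_cast hs2⟩
      have hfr : Int.fract s = s - ⌊t⌋ := by rw [Int.fract, hfloor]
      simp only [sawtooth, hfr]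
      rw [min_eq_right (by linarith)]
      ring
    have hd : HasDerivAt (fun s => (⌊t⌋:ℝ) + 1 - s) (-1) t := by
      simpa using ((hasDerivAt_id t).const_sub ((⌊t⌋:ℝ) + 1))
    have heq : sawtooth =ᶠ[nhds t] (fun s => (⌊t⌋:ℝ) + 1 - s) :=
      Filter.eventuallyEq_of_mem (isOpen_Ioo.mem_nhds ht) key
    have hres := hd.congr_of_eventuallyEq heq
    have hh1 : haar t = -1 := by rw [haar, if_neg h]
    rw [hh1]; exact hres

lemma null_level {n : ℕ} (v : Fin n → ℤ) (hv : v ≠ 0) (r : ℝ) :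
    volume {x : Fin n → ℝ | idot x v = r} = 0 := by
  obtain ⟨j, hj⟩ := Function.ne_iff.mp hv
  have hjr : ((v j : ℝ)) ≠ 0 := by exact_mod_cast hj
  set Lc : (Fin n → ℝ) →L[ℝ] ℝ :=
    ∑ k, ((v k : ℝ)) • (ContinuousLinearMap.proj k) with hLc
  have hLapp : ∀ x, Lc x = idot x v := by
    intro x
    simp [hLc, idot, ContinuousLinearMap.sum_apply, mul_comm]
  set x₀ : Fin n → ℝ := Pi.single j (r / (v j : ℝ)) with hx₀
  have hℓx₀ : idot x₀ v = r := by
    rw [idot, hx₀]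
    rw [Finset.sum_eq_single j]
    · rw [Pi.single_eq_same]; field_simp
    · intro b _ hb; rw [Pi.single_eq_of_ne hb]; ring
    · intro hmem; exact absurd (Finset.mem_univ j) hmem
  have hpre : (fun y => y + x₀) ⁻¹' {x : Fin n → ℝ | idot x v = r}
      = {y : Fin n → ℝ | idot y v = 0} := by
    ext y
    have : idot (y + x₀) v = idot y v + idot x₀ v := by
      simp [idot, add_mul, Finset.sum_add_distrib]
    simp only [Set.mem_preimage, Set.mem_setOf_eq, this, hℓx₀]
    constructor <;> intro h <;> linarith
  have hker : {y : Fin n → ℝ | idot y v = 0} = (LinearMap.ker (Lc.toLinearMap) : Set (Fin n → ℝ)) := by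
    ext y
    simp [LinearMap.mem_ker, hLapp]
  have hne : LinearMap.ker (Lc.toLinearMap) ≠ ⊤ := by
    intro htop
    have : Lc (Pi.single j 1) = 0 := by
      have : Pi.single j (1:ℝ) ∈ LinearMap.ker (Lc.toLinearMap) := htop ▸ Submodule.mem_top
      simpa using this
    rw [hLapp] at this
    rw [idot, Finset.sum_eq_single j (fun b _ hb => by rw [Pi.single_eq_of_ne hb]; ring)
      (fun hmem => absurd (Finset.mem_univ j) hmem)] at this
    rw [Pi.single_eq_same, one_mul] at this
    exact hjr this
  calc volume {x : Fin n → ℝ | idot x v = r}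
      = volume ((fun y => y + x₀) ⁻¹' {x : Fin n → ℝ | idot x v = r}) :=
        (measure_preimage_add_right volume x₀ _).symm
    _ = volume ({y : Fin n → ℝ | idot y v = 0}) := by rw [hpre]
    _ = 0 := by rw [hker]; exact Measure.addHaar_submodule volume _ hne

lemma measurableSet_unitBox (n : ℕ) : MeasurableSet (unitBox n) :=
  MeasurableSet.univ_pi fun _ => measurableSet_Ico

lemma volume_unitBox (n : ℕ) : volume (unitBox n) = 1 := by
  rw [unitBox, volume_pi_pi]
  simp [Real.volume_Ico]

lemma sgn_inj {b b' : Bool} (h : sgn b = sgn b') : b = b' := by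
  cases b <;> cases b' <;> simp [sgn] at * <;> norm_num at h

theorem stmt15 {m n : ℕ} (f : Matrix (Fin m) (Fin n) ℝ → ℝ) (hf : Continuous f)
    (hqc : QuasiconvexFn f) :
    ∀ (N : ℕ) (A : Matrix (Fin m) (Fin n) ℝ) (a : Fin N → Fin m → ℝ)
      (nv : Fin N → Fin n → ℤ) (c : Fin N → ℝ),
      f A ≤ ∑ ε : Fin N → Bool,
        (volume {x : Fin n → ℝ | x ∈ unitBox n ∧
          ∀ i, haar (idot x (nv i) + c i) = sgn (ε i)}).toReal *
        f (A + ∑ i, sgn (ε i) • vecMulVec (a i) fun k => (nv i k : ℝ)) := by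
  classical
  intro N A a nv c
  -- setup
  set θ : Fin N → (Fin n → ℝ) → ℝ := fun i x => idot x (nv i) + c i with hθ
  set φ : (Fin n → ℝ) → (Fin m → ℝ) := fun x => ∑ i, sawtooth (θ i x) • a i with hφ
  set L : Fin N → ((Fin n → ℝ) →L[ℝ] ℝ) :=
    fun i => ∑ k, ((nv i k : ℝ)) • (ContinuousLinearMap.proj k) with hL
  have hLapp : ∀ i x, L i x = idot x (nv i) := by
    intro i x
    simp [hL, idot, ContinuousLinearMap.sum_apply, mul_comm]
  set X : (Fin N → Bool) → Matrix (Fin m) (Fin n) ℝ :=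
    fun ε => ∑ i, sgn (ε i) • vecMulVec (a i) fun k => (nv i k : ℝ) with hX
  set S : (Fin N → Bool) → Set (Fin n → ℝ) :=
    fun ε => {x | x ∈ unitBox n ∧ ∀ i, haar (idot x (nv i) + c i) = sgn (ε i)} with hS
  -- Lipschitz
  set Ki : Fin N → NNReal := fun i => ∑ k, ‖(nv i k : ℝ)‖₊ with hKi
  set Kc : NNReal := ∑ i, ‖a i‖₊ * Ki i with hKc
  have hθlip : ∀ i (x y : Fin n → ℝ), |θ i x - θ i y| ≤ (Ki i) * dist x y := by
    intro i x y
    have : θ i x - θ i y = ∑ k, (x k - y k) * (nv i k : ℝ) := by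
      simp [hθ, idot, sub_mul, Finset.sum_sub_distrib]
    rw [this]
    calc |∑ k, (x k - y k) * (nv i k : ℝ)| ≤ ∑ k, |(x k - y k) * (nv i k : ℝ)| :=
          Finset.abs_sum_le_sum_abs _ _
      _ ≤ ∑ k, dist x y * |(nv i k : ℝ)| := by
          apply Finset.sum_le_sum
          intro k _
          rw [abs_mul]
          have hxy : |x k - y k| ≤ dist x y := by
            rw [← Real.dist_eq]; exact dist_le_pi_dist x y k
          exact mul_le_mul_of_nonneg_right hxy (abs_nonneg _)
      _ = (Ki i) * dist x y := by
          rw [← Finset.mul_sum, mul_comm]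
          congr 1
          simp [hKi, NNReal.coe_sum, Real.norm_eq_abs]
  have hlip : LipschitzWith Kc φ := by
    apply LipschitzWith.of_dist_le_mul
    intro x y
    rw [dist_pi_le_iff (by positivity)]
    intro j
    have hcoord : φ x j - φ y j = ∑ i, (sawtooth (θ i x) - sawtooth (θ i y)) * a i j := by
      simp only [hφ, Finset.sum_apply, Pi.smul_apply, smul_eq_mul]
      rw [← Finset.sum_sub_distrib]
      exact Finset.sum_congr rfl fun i _ => by ring
    rw [Real.dist_eq, hcoord]
    calc |∑ i, (sawtooth (θ i x) - sawtooth (θ i y)) * a i j|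
        ≤ ∑ i, |(sawtooth (θ i x) - sawtooth (θ i y)) * a i j| := Finset.abs_sum_le_sum_abs _ _
      _ ≤ ∑ i, (‖a i‖₊ * Ki i : NNReal) * dist x y := by
          apply Finset.sum_le_sum
          intro i _
          rw [abs_mul]
          calc |sawtooth (θ i x) - sawtooth (θ i y)| * |a i j|
              ≤ ((Ki i : ℝ) * dist x y) * ‖a i‖ := by
                have h1 : |sawtooth (θ i x) - sawtooth (θ i y)| ≤ (Ki i : ℝ) * dist x y :=
                  le_trans (sawtooth_lip _ _) (hθlip i x y)
                have h2 : |a i j| ≤ ‖a i‖ := by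
                  simpa [Real.norm_eq_abs] using norm_le_pi_norm (a i) j
                exact mul_le_mul h1 h2 (abs_nonneg _) (by positivity)
            _ = (‖a i‖₊ * Ki i : NNReal) * dist x y := by
                push_cast
                ring
      _ = Kc * dist x y := by
          rw [← Finset.sum_mul]
          congr 1
          rw [hKc]
          push_cast
          rfl
  -- periodicity
  have hper : ∀ (x : Fin n → ℝ) (k : Fin n → ℤ), φ (x + fun j => (k j : ℝ)) = φ x := by
    intro x k
    simp only [hφ]
    refine Finset.sum_congr rfl fun i _ => ?_
    congr 1
    have : θ i (x + fun j => (k j : ℝ)) = θ i x + ((∑ j, k j * nv i j : ℤ) : ℝ) := by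
      simp only [hθ, idot, Pi.add_apply, add_mul, Finset.sum_add_distrib]
      push_cast
      ring
    rw [this, sawtooth_add_int]
  have key := hqc A φ Kc hlip hper
  -- gradient formula on good points
  have hgrad : ∀ x : Fin n → ℝ,
      (∀ i, nv i ≠ 0 → Int.fract (θ i x) ≠ 0 ∧ Int.fract (θ i x) ≠ 1/2) →
      gradMatrix φ x = ∑ i, haar (θ i x) • vecMulVec (a i) (fun k => (nv i k : ℝ)) := by
    intro x hx
    have hterm : ∀ i, HasFDerivAt (fun y => sawtooth (θ i y) • a i)
        (((haar (θ i x)) • L i).smulRight (a i)) x := by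
      intro i
      by_cases hnv : nv i = 0
      · have hL0 : L i = 0 := by
          ext y
          simp [hL, hnv]
        have hconst : (fun y : Fin n → ℝ => sawtooth (θ i y) • a i)
            = fun _ => sawtooth (c i) • a i := by
          funext y
          simp [hθ, idot, hnv]
        rw [hconst, hL0, smul_zero]
        have : ((0 : (Fin n → ℝ) →L[ℝ] ℝ).smulRight (a i)) = 0 := by
          ext y
          simp
        rw [this]
        exact hasFDerivAt_const _ _
      · have hθd : HasFDerivAt (θ i) (L i) x := by
          have heq : θ i = fun y => L i y + c i := by
            funext y
            rw [hθ, hLapp]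
          rw [heq]
          exact (L i).hasFDerivAt.add_const _
        have hsaw : HasDerivAt sawtooth (haar (θ i x)) (θ i x) :=
          sawtooth_hasDerivAt (hx i hnv).1 (hx i hnv).2
        exact ((hsaw.comp_hasFDerivAt x hθd)).smul_const (a i)
    have hD : HasFDerivAt φ (∑ i, ((haar (θ i x)) • L i).smulRight (a i)) x := by
      rw [hφ]
      exact HasFDerivAt.fun_sum (fun i _ => hterm i)
    have hfd := hD.fderiv
    rw [gradMatrix, hfd]
    ext j k
    have hLsingle : ∀ i, L i (Pi.single k 1) = (nv i k : ℝ) := by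
      intro i
      rw [hLapp, idot]
      rw [Finset.sum_eq_single k (fun b _ hb => by rw [Pi.single_eq_of_ne hb]; ring)
        (fun hmem => absurd (Finset.mem_univ k) hmem)]
      rw [Pi.single_eq_same, one_mul]
    simp only [Matrix.of_apply, ContinuousLinearMap.coe_sum', Finset.sum_apply,
      ContinuousLinearMap.smulRight_apply, ContinuousLinearMap.coe_smul', Pi.smul_apply,
      Matrix.sum_apply, Matrix.smul_apply, Matrix.vecMulVec_apply, hLsingle, smul_eq_mul]
    exact Finset.sum_congr rfl fun i _ => by ring
  -- null set
  set B : Set (Fin n → ℝ) :=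
    {x | ∃ i, nv i ≠ 0 ∧ (Int.fract (θ i x) = 0 ∨ Int.fract (θ i x) = 1/2)} with hB
  have hBnull : volume B = 0 := by
    have hsub : B ⊆ ⋃ i : Fin N, ⋃ z : ℤ,
        ({x : Fin n → ℝ | nv i ≠ 0 ∧ idot x (nv i) = z - c i}
          ∪ {x : Fin n → ℝ | nv i ≠ 0 ∧ idot x (nv i) = z + 1/2 - c i}) := by
      intro x hxB
      obtain ⟨i, hi, hcase⟩ := hxB
      refine Set.mem_iUnion.mpr ⟨i, Set.mem_iUnion.mpr ⟨⌊θ i x⌋, ?_⟩⟩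
      have hfr : Int.fract (θ i x) = θ i x - ⌊θ i x⌋ := by rw [Int.fract]
      rcases hcase with h | h
      · left
        refine ⟨hi, ?_⟩
        have : θ i x = (⌊θ i x⌋ : ℝ) := by linarith [hfr ▸ h]
        simp only [hθ] at this
        linarith
      · right
        refine ⟨hi, ?_⟩
        have : θ i x = (⌊θ i x⌋ : ℝ) + 1/2 := by
          rw [hfr] at h
          linarith
        simp only [hθ] at this
        linarith
    apply measure_mono_null hsub
    apply measure_iUnion_null
    intro i
    apply measure_iUnion_null
    intro z
    by_cases hi : nv i = 0
    · have : ({x : Fin n → ℝ | nv i ≠ 0 ∧ idot x (nv i) = z - c i}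
          ∪ {x : Fin n → ℝ | nv i ≠ 0 ∧ idot x (nv i) = z + 1/2 - c i}) = ∅ := by
        ext x
        simp [hi]
      rw [this]
      simp
    · apply measure_union_null
      · exact measure_mono_null (fun x hx => hx.2) (null_level (nv i) hi _)
      · exact measure_mono_null (fun x hx => hx.2) (null_level (nv i) hi _)
  -- measurability of S ε
  have hmeasS : ∀ ε, MeasurableSet (S ε) := by
    intro ε
    have hrw : S ε = unitBox n ∩ ⋂ i, {x : Fin n → ℝ | haar (idot x (nv i) + c i) = sgn (ε i)} := by
      ext x
      simp only [hS, Set.mem_setOf_eq, Set.mem_inter_iff, Set.mem_iInter]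
    rw [hrw]
    apply (measurableSet_unitBox n).inter
    apply MeasurableSet.iInter
    intro i
    have hfm : Measurable (fun x : Fin n → ℝ => Int.fract (θ i x)) := by
      apply measurable_fract.comp
      apply Measurable.add_const
      apply Finset.measurable_sum
      intro k _
      exact (measurable_pi_apply k).mul_const _
    have hset : {x : Fin n → ℝ | haar (idot x (nv i) + c i) = sgn (ε i)}
        = (fun x => Int.fract (θ i x)) ⁻¹' (if ε i then Set.Iio (1/2) else (Set.Iio (1/2))ᶜ) := by
      ext x
      by_cases hb : ε i <;> by_cases hc : Int.fract (θ i x) < 1/2 <;>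
        simp [haar, sgn, hb, hc, hθ] <;> norm_num
    rw [hset]
    exact hfm (by split_ifs <;> [exact measurableSet_Iio; exact measurableSet_Iio.compl])
  -- rewrite the integral
  haveI hfin : IsFiniteMeasure (volume.restrict (unitBox n)) := by
    constructor
    rw [Measure.restrict_apply_univ, volume_unitBox]
    exact ENNReal.one_lt_top
  have hsum : (∫ x in unitBox n, f (A + gradMatrix φ x))
      = ∑ ε : Fin N → Bool, (volume (S ε)).toReal * f (A + X ε) := by
    have hcongr : (fun x => f (A + gradMatrix φ x))
        =ᵐ[volume.restrict (unitBox n)]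
        (fun x => ∑ ε : Fin N → Bool, (S ε).indicator (fun _ => f (A + X ε)) x) := by
      have hBc : ∀ᵐ x ∂(volume.restrict (unitBox n)), x ∉ B :=
        ae_restrict_of_ae (measure_eq_zero_iff_ae_notMem.mp hBnull)
      filter_upwards [hBc, ae_restrict_mem (measurableSet_unitBox n)] with x hxB hxU
      have hgood : ∀ i, nv i ≠ 0 → Int.fract (θ i x) ≠ 0 ∧ Int.fract (θ i x) ≠ 1/2 := by
        intro i hi
        constructor <;> intro hcon <;> exact hxB ⟨i, hi, by tauto⟩
      set ε₀ : Fin N → Bool := fun i => decide (Int.fract (θ i x) < 1/2) with hε₀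
      have hhaar : ∀ i, haar (θ i x) = sgn (ε₀ i) := by
        intro i
        by_cases hc : Int.fract (θ i x) < 1/2 <;> simp [haar, sgn, hε₀, hc]
      have hx1 : x ∈ S ε₀ := ⟨hxU, fun i => hhaar i⟩
      have hgx : gradMatrix φ x = X ε₀ := by
        rw [hgrad x hgood, hX]
        exact Finset.sum_congr rfl fun i _ => by rw [hhaar i]
      rw [hgx]
      rw [Finset.sum_eq_single ε₀]
      · rw [Set.indicator_of_mem hx1]
      · intro ε _ hne
        apply Set.indicator_of_notMem
        intro hxS
        apply hne
        funext i
        exact sgn_inj ((hxS.2 i).symm.trans (hhaar i))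
      · intro h; exact absurd (Finset.mem_univ ε₀) h
    rw [integral_congr_ae hcongr, integral_finset_sum]
    · refine Finset.sum_congr rfl fun ε _ => ?_
      rw [setIntegral_indicator (hmeasS ε), setIntegral_const]
      have hss : unitBox n ∩ S ε = S ε :=
        Set.inter_eq_self_of_subset_right (fun x hx => hx.1)
      rw [hss, smul_eq_mul]
      rfl
    · intro ε _
      exact (integrable_const _).indicator (hmeasS ε)
  simp only [hS, hX] at hsum
  exact key.trans (le_of_eq hsum)
end
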